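/- Let 𝒢 be a family of connected non-trivial graphs on a common vertex set V, and let ℋ and ℋ' be families of non-trivial graphs on disjoint common vertex sets V'₁ and V'₂, respectively. If there exists a simultaneous adjacency basis B of ℋ satisfying B ⊄ N_H(v) for every H ∈ ℋ and every v ∈ V'₁, and for every simultaneous adjacency basis B' of ℋ' there exist H' ∈ ℋ' and v' ∈ V'₂ such that B' ⊆ N_{H'}(v'), then Sd_A(𝒢⊙(ℋ+ℋ')) = |V| · Sd_A(ℋ) + |V| · Sd_A(ℋ') + Sγ(𝒢). -/

import Mathlib

open SimpleGraph

/-- `S` is a metric generator for `G`: every pair of distinct vertices is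
distinguished by some element of `S` via the shortest-path distance. -/
def IsMetricGen {V : Type*} (G : SimpleGraph V) (S : Set V) : Prop :=
  ∀ u v : V, u ≠ v → ∃ s ∈ S, G.dist s u ≠ G.dist s v

/-- `S` is an adjacency generator for `G`. -/
def IsAdjGen {V : Type*} (G : SimpleGraph V) (S : Set V) : Prop :=
  ∀ x y : V, x ∉ S → y ∉ S → x ≠ y → ∃ s ∈ S, Xor' (G.Adj s x) (G.Adj s y)

/-- `S` is a simultaneous metric generator for the family `𝒢`. -/
def IsSimMetricGen {V : Type*} (𝒢 : Set (SimpleGraph V)) (S : Set V) : Prop :=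
  ∀ G ∈ 𝒢, IsMetricGen G S

/-- `S` is a simultaneous adjacency generator for the family `ℋ`. -/
def IsSimAdjGen {V : Type*} (ℋ : Set (SimpleGraph V)) (S : Set V) : Prop :=
  ∀ H ∈ ℋ, IsAdjGen H S

/-- The simultaneous metric dimension of a family of graphs. -/
noncomputable def Sd {V : Type*} (𝒢 : Set (SimpleGraph V)) : ℕ :=
  sInf {n | ∃ S : Set V, S.ncard = n ∧ IsSimMetricGen 𝒢 S}

/-- The simultaneous adjacency dimension of a family of graphs. -/
noncomputable def SdA {V : Type*} (ℋ : Set (SimpleGraph V)) : ℕ :=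
  sInf {n | ∃ S : Set V, S.ncard = n ∧ IsSimAdjGen ℋ S}

/-- The adjacency dimension of a graph. -/
noncomputable def adjDim {V : Type*} (G : SimpleGraph V) : ℕ := SdA {G}

/-- `B` is an adjacency basis of `G`. -/
def IsAdjBasis {V : Type*} (G : SimpleGraph V) (B : Set V) : Prop :=
  IsAdjGen G B ∧ B.ncard = adjDim G

/-- `B` is a simultaneous adjacency basis of the family `ℋ`. -/
def IsSimAdjBasis {V : Type*} (ℋ : Set (SimpleGraph V)) (B : Set V) : Prop :=
  IsSimAdjGen ℋ B ∧ B.ncard = SdA ℋ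

/-- `D` is a dominating set of `G`. -/
def IsDomSet {V : Type*} (G : SimpleGraph V) (D : Set V) : Prop :=
  ∀ v ∉ D, ∃ u ∈ D, G.Adj u v

/-- `D` is a simultaneous dominating set of the family `𝒢`. -/
def IsSimDomSet {V : Type*} (𝒢 : Set (SimpleGraph V)) (D : Set V) : Prop :=
  ∀ G ∈ 𝒢, IsDomSet G D

/-- The simultaneous domination number of a family of graphs. -/
noncomputable def Sgamma {V : Type*} (𝒢 : Set (SimpleGraph V)) : ℕ :=
  sInf {n | ∃ D : Set V, D.ncard = n ∧ IsSimDomSet 𝒢 D}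

/-- The domination number of a graph. -/
noncomputable def domNum {V : Type*} (G : SimpleGraph V) : ℕ := Sgamma {G}

/-- `γ'(G) = min over vertices `v` of `γ(G - v)`. -/
noncomputable def gammaPrime {V : Type*} (G : SimpleGraph V) : ℕ :=
  sInf {n | ∃ v : V, n = domNum (G.induce {v}ᶜ)}

/-- The corona product `G ⊙ H`: one copy of `G` together with a copy of `H`
for each vertex `i` of `G`, joining `i` to every vertex of its copy. -/
def corona {V V' : Type*} (G : SimpleGraph V) (H : SimpleGraph V') :
    SimpleGraph (V ⊕ V × V') where
  Adj x y :=
    match x, y with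
    | Sum.inl i, Sum.inl j => G.Adj i j
    | Sum.inl i, Sum.inr p => i = p.1
    | Sum.inr p, Sum.inl j => p.1 = j
    | Sum.inr p, Sum.inr q => p.1 = q.1 ∧ H.Adj p.2 q.2
  symm := by
    constructor
    rintro (i | p) (j | q) h
    · exact G.adj_symm h
    · exact h.symm
    · exact h.symm
    · exact ⟨h.1.symm, H.adj_symm h.2⟩
  loopless := by
    constructor
    rintro (i | p) h
    · exact G.loopless.irrefl i h
    · exact H.loopless.irrefl p.2 h.2

/-- The family `{G ⊙ H : G ∈ 𝒢, H ∈ ℋ}` of corona products. -/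
def coronaFam {V V' : Type*} (𝒢 : Set (SimpleGraph V)) (ℋ : Set (SimpleGraph V')) :
    Set (SimpleGraph (V ⊕ V × V')) :=
  {K | ∃ G ∈ 𝒢, ∃ H ∈ ℋ, K = corona G H}

/-- The join `G + H` of two (vertex-disjoint) graphs. -/
def joinG {V₁ V₂ : Type*} (G : SimpleGraph V₁) (H : SimpleGraph V₂) :
    SimpleGraph (V₁ ⊕ V₂) where
  Adj x y :=
    match x, y with
    | Sum.inl a, Sum.inl b => G.Adj a b
    | Sum.inl _, Sum.inr _ => True
    | Sum.inr _, Sum.inl _ => True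
    | Sum.inr a, Sum.inr b => H.Adj a b
  symm := by
    constructor
    rintro (a | a) (b | b) h
    · exact G.adj_symm h
    · trivial
    · trivial
    · exact H.adj_symm h
  loopless := by
    constructor
    rintro (a | a) h
    · exact G.loopless.irrefl a h
    · exact H.loopless.irrefl a h

/-- The family `{G + H : G ∈ 𝒢, H ∈ ℋ}` of joins. -/
def joinFam {V₁ V₂ : Type*} (𝒢 : Set (SimpleGraph V₁)) (ℋ : Set (SimpleGraph V₂)) :
    Set (SimpleGraph (V₁ ⊕ V₂)) :=
  {K | ∃ G ∈ 𝒢, ∃ H ∈ ℋ, K = joinG G H}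

/-- The family `𝒢_B(G)`: all graphs `G'` such that, for some permutation `f` of the
vertex set fixing `B` pointwise, `N_{G'}(x) = f(N_G(x))` for every `x ∈ B`. -/
def GBfam {V : Type*} (G : SimpleGraph V) (B : Set V) : Set (SimpleGraph V) :=
  {G' | ∃ f : Equiv.Perm V, (∀ x ∈ B, f x = x) ∧
    ∀ x ∈ B, G'.neighborSet x = f '' (G.neighborSet x)}
section Aux

variable {V V₁ V₂ : Type*}

/-- Auxiliary: decomposed subset of the corona vertex set. -/
def decompSet (S₀ : Set V) (S₁ : V → Set V₁) (S₂ : V → Set V₂) :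
    Set (V ⊕ V × (V₁ ⊕ V₂)) := fun w =>
  match w with
  | Sum.inl i => i ∈ S₀
  | Sum.inr (i, Sum.inl a) => a ∈ S₁ i
  | Sum.inr (i, Sum.inr b) => b ∈ S₂ i

def decompEquiv (S₀ : Set V) (S₁ : V → Set V₁) (S₂ : V → Set V₂) :
    (decompSet S₀ S₁ S₂) ≃ (S₀ ⊕ Σ i : V, (↥(S₁ i) ⊕ ↥(S₂ i))) where
  toFun := fun x => match x with
    | ⟨Sum.inl i, h⟩ => Sum.inl ⟨i, h⟩
    | ⟨Sum.inr (i, Sum.inl a), h⟩ => Sum.inr ⟨i, Sum.inl ⟨a, h⟩⟩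
    | ⟨Sum.inr (i, Sum.inr b), h⟩ => Sum.inr ⟨i, Sum.inr ⟨b, h⟩⟩
  invFun := fun x => match x with
    | Sum.inl ⟨i, h⟩ => ⟨Sum.inl i, h⟩
    | Sum.inr ⟨i, Sum.inl ⟨a, h⟩⟩ => ⟨Sum.inr (i, Sum.inl a), h⟩
    | Sum.inr ⟨i, Sum.inr ⟨b, h⟩⟩ => ⟨Sum.inr (i, Sum.inr b), h⟩
  left_inv := by rintro ⟨(i | ⟨i, a | b⟩), h⟩ <;> rfl
  right_inv := by rintro (⟨i, h⟩ | ⟨i, (⟨a, h⟩ | ⟨b, h⟩)⟩) <;> rfl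

lemma card_decomp [Fintype V] [Fintype V₁] [Fintype V₂]
    (S₀ : Set V) (S₁ : V → Set V₁) (S₂ : V → Set V₂) :
    (decompSet S₀ S₁ S₂).ncard = S₀.ncard + ∑ i : V, ((S₁ i).ncard + (S₂ i).ncard) := by
  classical
  rw [← Nat.card_coe_set_eq, Nat.card_congr (decompEquiv S₀ S₁ S₂), Nat.card_sum]
  rw [Nat.card_coe_set_eq S₀]
  congr 1
  · rw [Nat.card_eq_fintype_card, Fintype.card_sigma]
    refine Finset.sum_congr rfl fun i _ => ?_
    rw [← Nat.card_eq_fintype_card, Nat.card_sum, Nat.card_coe_set_eq, Nat.card_coe_set_eq]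

@[simp] lemma mem_decompSet_inl {S₀ : Set V} {S₁ : V → Set V₁} {S₂ : V → Set V₂} {i : V} :
    (Sum.inl i ∈ decompSet S₀ S₁ S₂) ↔ i ∈ S₀ := Iff.rfl

@[simp] lemma mem_decompSet_inrl {S₀ : Set V} {S₁ : V → Set V₁} {S₂ : V → Set V₂} {i : V} {a : V₁} :
    (Sum.inr (i, Sum.inl a) ∈ decompSet S₀ S₁ S₂) ↔ a ∈ S₁ i := Iff.rfl

@[simp] lemma mem_decompSet_inrr {S₀ : Set V} {S₁ : V → Set V₁} {S₂ : V → Set V₂} {i : V} {b : V₂} :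
    (Sum.inr (i, Sum.inr b) ∈ decompSet S₀ S₁ S₂) ↔ b ∈ S₂ i := Iff.rfl

end Aux

section Aux2

variable {V V₁ V₂ : Type*}

@[simp] lemma corona_adj_inl_inl {G : SimpleGraph V} {H : SimpleGraph V₁} {i j : V} :
    (corona G H).Adj (Sum.inl i) (Sum.inl j) ↔ G.Adj i j := Iff.rfl

@[simp] lemma corona_adj_inl_inr {G : SimpleGraph V} {H : SimpleGraph V₁} {i j : V} {u : V₁} :
    (corona G H).Adj (Sum.inl i) (Sum.inr (j, u)) ↔ i = j := Iff.rfl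

@[simp] lemma corona_adj_inr_inl {G : SimpleGraph V} {H : SimpleGraph V₁} {i j : V} {u : V₁} :
    (corona G H).Adj (Sum.inr (i, u)) (Sum.inl j) ↔ i = j := Iff.rfl

@[simp] lemma corona_adj_inr_inr {G : SimpleGraph V} {H : SimpleGraph V₁} {i j : V} {u w : V₁} :
    (corona G H).Adj (Sum.inr (i, u)) (Sum.inr (j, w)) ↔ i = j ∧ H.Adj u w := Iff.rfl

@[simp] lemma joinG_adj_inl_inl {G : SimpleGraph V₁} {H : SimpleGraph V₂} {a b : V₁} :
    (joinG G H).Adj (Sum.inl a) (Sum.inl b) ↔ G.Adj a b := Iff.rfl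

@[simp] lemma joinG_adj_inl_inr {G : SimpleGraph V₁} {H : SimpleGraph V₂} {a : V₁} {b : V₂} :
    (joinG G H).Adj (Sum.inl a) (Sum.inr b) ↔ True := Iff.rfl

@[simp] lemma joinG_adj_inr_inl {G : SimpleGraph V₁} {H : SimpleGraph V₂} {a : V₂} {b : V₁} :
    (joinG G H).Adj (Sum.inr a) (Sum.inl b) ↔ True := Iff.rfl

@[simp] lemma joinG_adj_inr_inr {G : SimpleGraph V₁} {H : SimpleGraph V₂} {a b : V₂} :
    (joinG G H).Adj (Sum.inr a) (Sum.inr b) ↔ H.Adj a b := Iff.rfl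

lemma exists_simAdjGen_ncard {α : Type*} [Fintype α] (F : Set (SimpleGraph α)) :
    ∃ B : Set α, B.ncard = SdA F ∧ IsSimAdjGen F B := by
  have hne : {n | ∃ S : Set α, S.ncard = n ∧ IsSimAdjGen F S}.Nonempty :=
    ⟨(Set.univ : Set α).ncard, Set.univ, rfl,
      fun H _ x y hx _ _ => absurd (Set.mem_univ x) hx⟩
  exact Nat.sInf_mem hne

lemma exists_simDomSet_ncard {α : Type*} [Fintype α] (F : Set (SimpleGraph α)) :
    ∃ D : Set α, D.ncard = Sgamma F ∧ IsSimDomSet F D := by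
  have hne : {n | ∃ D : Set α, D.ncard = n ∧ IsSimDomSet F D}.Nonempty :=
    ⟨(Set.univ : Set α).ncard, Set.univ, rfl,
      fun G _ v hv => absurd (Set.mem_univ v) hv⟩
  exact Nat.sInf_mem hne

lemma SdA_le_ncard {α : Type*} {F : Set (SimpleGraph α)} {S : Set α}
    (h : IsSimAdjGen F S) : SdA F ≤ S.ncard := Nat.sInf_le ⟨S, rfl, h⟩

lemma Sgamma_le_ncard {α : Type*} {F : Set (SimpleGraph α)} {D : Set α}
    (h : IsSimDomSet F D) : Sgamma F ≤ D.ncard := Nat.sInf_le ⟨D, rfl, h⟩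

lemma simAdjGen_nonempty {α : Type*} [Nontrivial α] {F : Set (SimpleGraph α)} {B : Set α}
    (hF : F.Nonempty) (h : IsSimAdjGen F B) : B.Nonempty := by
  by_contra hB
  rw [Set.not_nonempty_iff_eq_empty] at hB
  subst hB
  obtain ⟨H, hH⟩ := hF
  obtain ⟨x, y, hxy⟩ := exists_pair_ne α
  obtain ⟨s, hs, -⟩ := h H hH x y (by simp) (by simp) hxy
  exact hs

end Aux2

section Main

variable {V V₁ V₂ : Type*}

lemma coronaFam_mem {𝒢 : Set (SimpleGraph V)} {ℋ : Set (SimpleGraph V₁)}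
    {ℋ' : Set (SimpleGraph V₂)} {G : SimpleGraph V} {H : SimpleGraph V₁}
    {H' : SimpleGraph V₂} (hG : G ∈ 𝒢) (hH : H ∈ ℋ) (hH' : H' ∈ ℋ') :
    corona G (joinG H H') ∈ coronaFam 𝒢 (joinFam ℋ ℋ') :=
  ⟨G, hG, _, ⟨H, hH, H', hH', rfl⟩, rfl⟩

lemma upper_bound [Fintype V] [Fintype V₁] [Nontrivial V₁] [Fintype V₂] [Nontrivial V₂]
    (𝒢 : Set (SimpleGraph V))
    (ℋ : Set (SimpleGraph V₁)) (hℋne : ℋ.Nonempty)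
    (ℋ' : Set (SimpleGraph V₂)) (hℋ'ne : ℋ'.Nonempty)
    (hB : ∃ B : Set V₁, IsSimAdjBasis ℋ B ∧ ∀ H ∈ ℋ, ∀ v : V₁, ¬ B ⊆ H.neighborSet v) :
    SdA (coronaFam 𝒢 (joinFam ℋ ℋ')) ≤
      Fintype.card V * SdA ℋ + Fintype.card V * SdA ℋ' + Sgamma 𝒢 := by
  classical
  obtain ⟨B, ⟨hBgen, hBcard⟩, hBnsub⟩ := hB
  obtain ⟨B', hB'card, hB'gen⟩ := exists_simAdjGen_ncard ℋ'
  obtain ⟨D, hDcard, hDdom⟩ := exists_simDomSet_ncard 𝒢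
  have hBne : B.Nonempty := simAdjGen_nonempty hℋne hBgen
  have hB'ne : B'.Nonempty := simAdjGen_nonempty hℋ'ne hB'gen
  have hcard : (decompSet D (fun _ => B) (fun _ => B')).ncard
      = Fintype.card V * SdA ℋ + Fintype.card V * SdA ℋ' + Sgamma 𝒢 := by
    rw [card_decomp, Finset.sum_const, Finset.card_univ, smul_eq_mul, hBcard, hB'card,
      hDcard, mul_add]
    ring
  have hgen : IsSimAdjGen (coronaFam 𝒢 (joinFam ℋ ℋ'))
      (decompSet D (fun _ => B) (fun _ => B')) := by
    rintro K ⟨G, hG, J, ⟨H, hH, H', hH', rfl⟩, rfl⟩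
    have key : ∀ (i : V) (u : V₁ ⊕ V₂), ∃ w,
        (Sum.inr (i, w) : V ⊕ V × (V₁ ⊕ V₂)) ∈ decompSet D (fun _ => B) (fun _ => B') ∧
        (joinG H H').Adj w u := by
      rintro i (a | b)
      · obtain ⟨c, hc⟩ := hB'ne
        exact ⟨Sum.inr c, hc, trivial⟩
      · obtain ⟨c, hc⟩ := hBne
        exact ⟨Sum.inl c, hc, trivial⟩
    rintro (i | ⟨i, u⟩) (j | ⟨j, w⟩) hx hy hxy
    · -- inl i, inl j
      have hij : i ≠ j := fun h => hxy (by rw [h])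
      obtain ⟨c, hc⟩ := hBne
      refine ⟨Sum.inr (i, Sum.inl c), hc, ?_⟩
      simp only [corona_adj_inr_inl]
      simp [Xor', hij]
    · -- inl i, inr (j, w)
      by_cases hij : i = j
      · subst hij
        have hiD : i ∉ D := hx
        obtain ⟨k, hk, hadj⟩ := hDdom G hG i hiD
        refine ⟨Sum.inl k, hk, ?_⟩
        simp only [corona_adj_inl_inl, corona_adj_inl_inr]
        have hki : k ≠ i := G.ne_of_adj hadj
        simp [Xor', hadj, hki]
      · obtain ⟨w', hw', hadjw⟩ := key j w
        refine ⟨Sum.inr (j, w'), hw', ?_⟩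
        simp only [corona_adj_inr_inl, corona_adj_inr_inr]
        simp [Xor', hadjw, Ne.symm hij]
    · -- inr (i, u), inl j
      by_cases hij : i = j
      · subst hij
        have hiD : i ∉ D := hy
        obtain ⟨k, hk, hadj⟩ := hDdom G hG i hiD
        refine ⟨Sum.inl k, hk, ?_⟩
        simp only [corona_adj_inl_inl, corona_adj_inl_inr]
        have hki : k ≠ i := G.ne_of_adj hadj
        simp [Xor', hadj, hki]
      · obtain ⟨w', hw', hadjw⟩ := key i u
        refine ⟨Sum.inr (i, w'), hw', ?_⟩
        simp only [corona_adj_inr_inl, corona_adj_inr_inr]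
        simp [Xor', hadjw, hij]
    · -- inr (i, u), inr (j, w)
      by_cases hij : i = j
      · subst hij
        have huw : u ≠ w := fun h => hxy (by rw [h])
        rcases u with a | b <;> rcases w with c | d
        · -- both in V₁ part
          have hac : a ≠ c := fun h => huw (by rw [h])
          obtain ⟨e, he, hxor⟩ := hBgen H hH a c hx hy hac
          refine ⟨Sum.inr (i, Sum.inl e), he, ?_⟩
          simp only [corona_adj_inr_inr, joinG_adj_inl_inl]
          simp only [Xor'] at hxor ⊢
          simpa using hxor
        · -- inl a, inr d : use element of B not adjacent to a
          obtain ⟨e, heB, hena⟩ := Set.not_subset.mp (hBnsub H hH a)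
          refine ⟨Sum.inr (i, Sum.inl e), heB, ?_⟩
          simp only [corona_adj_inr_inr, joinG_adj_inl_inl, joinG_adj_inl_inr]
          have : ¬ H.Adj e a := fun h => hena h.symm
          simp [Xor', this]
        · -- inr b, inl c
          obtain ⟨e, heB, henc⟩ := Set.not_subset.mp (hBnsub H hH c)
          refine ⟨Sum.inr (i, Sum.inl e), heB, ?_⟩
          simp only [corona_adj_inr_inr, joinG_adj_inl_inl, joinG_adj_inl_inr]
          have : ¬ H.Adj e c := fun h => henc h.symm
          simp [Xor', this]
        · -- both in V₂ part
          have hbd : b ≠ d := fun h => huw (by rw [h])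
          obtain ⟨e, he, hxor⟩ := hB'gen H' hH' b d hx hy hbd
          refine ⟨Sum.inr (i, Sum.inr e), he, ?_⟩
          simp only [corona_adj_inr_inr, joinG_adj_inr_inr]
          simp only [Xor'] at hxor ⊢
          simpa using hxor
      · obtain ⟨w', hw', hadjw⟩ := key i u
        refine ⟨Sum.inr (i, w'), hw', ?_⟩
        simp only [corona_adj_inr_inr]
        simp [Xor', hadjw, hij]
  calc SdA (coronaFam 𝒢 (joinFam ℋ ℋ')) ≤ _ := SdA_le_ncard hgen
    _ = _ := hcard

end Main

section Lower

variable {V V₁ V₂ : Type*}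

lemma lower_bound [Fintype V] [Fintype V₁] [Fintype V₂]
    (𝒢 : Set (SimpleGraph V)) (h𝒢ne : 𝒢.Nonempty)
    (ℋ : Set (SimpleGraph V₁)) (hℋne : ℋ.Nonempty)
    (ℋ' : Set (SimpleGraph V₂)) (hℋ'ne : ℋ'.Nonempty)
    (hB' : ∀ B' : Set V₂, IsSimAdjBasis ℋ' B' →
      ∃ H' ∈ ℋ', ∃ v' : V₂, B' ⊆ H'.neighborSet v') :
    Fintype.card V * SdA ℋ + Fintype.card V * SdA ℋ' + Sgamma 𝒢 ≤
      SdA (coronaFam 𝒢 (joinFam ℋ ℋ')) := by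
  classical
  obtain ⟨S, hScard, hSgen⟩ := exists_simAdjGen_ncard (coronaFam 𝒢 (joinFam ℋ ℋ'))
  rw [← hScard]
  obtain ⟨G₀, hG₀⟩ := h𝒢ne
  obtain ⟨H₀, hH₀⟩ := hℋne
  obtain ⟨H₀', hH₀'⟩ := hℋ'ne
  set S₀ : Set V := {i | Sum.inl i ∈ S} with hS₀
  set S₁ : V → Set V₁ := fun i => {a | Sum.inr (i, Sum.inl a) ∈ S} with hS₁
  set S₂ : V → Set V₂ := fun i => {b | Sum.inr (i, Sum.inr b) ∈ S} with hS₂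
  have hSeq : S = decompSet S₀ S₁ S₂ := by
    ext w; rcases w with i | ⟨i, a | b⟩ <;> rfl
  have hgen1 : ∀ i, IsSimAdjGen ℋ (S₁ i) := by
    intro i H hH a b ha hb hab
    obtain ⟨s, hs, hxor⟩ := hSgen _ (coronaFam_mem hG₀ hH hH₀')
      (Sum.inr (i, Sum.inl a)) (Sum.inr (i, Sum.inl b)) ha hb (by simp [hab])
    rcases s with j | ⟨j, c | c⟩
    · simp only [corona_adj_inl_inr] at hxor
      exact absurd hxor (by simp [Xor'])
    · simp only [corona_adj_inr_inr, joinG_adj_inl_inl] at hxor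
      by_cases hji : j = i
      · subst hji
        refine ⟨c, hs, ?_⟩
        simp only [Xor'] at hxor ⊢
        simpa using hxor
      · exact absurd hxor (by simp [Xor', hji])
    · simp only [corona_adj_inr_inr, joinG_adj_inr_inl] at hxor
      exact absurd hxor (by simp [Xor'])
  have hgen2 : ∀ i, IsSimAdjGen ℋ' (S₂ i) := by
    intro i H' hH' a b ha hb hab
    obtain ⟨s, hs, hxor⟩ := hSgen _ (coronaFam_mem hG₀ hH₀ hH')
      (Sum.inr (i, Sum.inr a)) (Sum.inr (i, Sum.inr b)) ha hb (by simp [hab])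
    rcases s with j | ⟨j, c | c⟩
    · simp only [corona_adj_inl_inr] at hxor
      exact absurd hxor (by simp [Xor'])
    · simp only [corona_adj_inr_inr, joinG_adj_inl_inr] at hxor
      exact absurd hxor (by simp [Xor'])
    · simp only [corona_adj_inr_inr, joinG_adj_inr_inr] at hxor
      by_cases hji : j = i
      · subst hji
        refine ⟨c, hs, ?_⟩
        simp only [Xor'] at hxor ⊢
        simpa using hxor
      · exact absurd hxor (by simp [Xor', hji])
  have hcard1 : ∀ i, SdA ℋ ≤ (S₁ i).ncard := fun i => SdA_le_ncard (hgen1 i)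
  have hcard2 : ∀ i, SdA ℋ' ≤ (S₂ i).ncard := fun i => SdA_le_ncard (hgen2 i)
  set T : Set V := {i | SdA ℋ + SdA ℋ' < (S₁ i).ncard + (S₂ i).ncard} with hT
  have hdom : IsSimDomSet 𝒢 (S₀ ∪ T) := by
    intro G hG i hiD
    have hi0 : i ∉ S₀ := fun h => hiD (Or.inl h)
    have hile : (S₁ i).ncard + (S₂ i).ncard ≤ SdA ℋ + SdA ℋ' :=
      not_lt.mp (fun h => hiD (Or.inr h))
    have h2card : (S₂ i).ncard = SdA ℋ' := by
      have := hcard1 i; have := hcard2 i; omega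
    obtain ⟨H', hH', v', hsub⟩ := hB' (S₂ i) ⟨hgen2 i, h2card⟩
    have hx : (Sum.inr (i, Sum.inr v') : V ⊕ V × (V₁ ⊕ V₂)) ∉ S := by
      intro h
      exact H'.loopless.irrefl v' (hsub h)
    obtain ⟨s, hs, hxor⟩ := hSgen _ (coronaFam_mem hG hH₀ hH')
      (Sum.inr (i, Sum.inr v')) (Sum.inl i) hx hi0 (by simp)
    rcases s with j | ⟨j, c | c⟩
    · simp only [corona_adj_inl_inr, corona_adj_inl_inl] at hxor
      have hji : j ≠ i := fun h => hi0 (h ▸ hs)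
      have hadj : G.Adj j i := by
        rcases hxor with ⟨h1, h2⟩ | ⟨h1, h2⟩
        · exact absurd h1 hji
        · exact h1
      exact ⟨j, Or.inl hs, hadj⟩
    · simp only [corona_adj_inr_inr, corona_adj_inr_inl, joinG_adj_inl_inr] at hxor
      exact absurd hxor (by simp [Xor'])
    · simp only [corona_adj_inr_inr, corona_adj_inr_inl, joinG_adj_inr_inr] at hxor
      rcases hxor with ⟨⟨h1, h2⟩, h3⟩ | ⟨h1, h2⟩
      · exact absurd h1 h3
      · subst h1
        exact absurd ⟨rfl, (hsub hs).symm⟩ h2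
  have hγ : Sgamma 𝒢 ≤ (S₀ ∪ T).ncard := Sgamma_le_ncard hdom
  have hScard2 : S.ncard = S₀.ncard + ∑ i : V, ((S₁ i).ncard + (S₂ i).ncard) := by
    rw [hSeq]; exact card_decomp _ _ _
  have hsum : ∑ i : V, ((S₁ i).ncard + (S₂ i).ncard)
      = (∑ i : V, ((S₁ i).ncard + (S₂ i).ncard - (SdA ℋ + SdA ℋ')))
        + Fintype.card V * (SdA ℋ + SdA ℋ') := by
    calc ∑ i : V, ((S₁ i).ncard + (S₂ i).ncard)
        = ∑ i : V, (((S₁ i).ncard + (S₂ i).ncard - (SdA ℋ + SdA ℋ')) + (SdA ℋ + SdA ℋ')) :=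
          Finset.sum_congr rfl (fun i _ => by
            have := hcard1 i; have := hcard2 i; omega)
      _ = (∑ i : V, ((S₁ i).ncard + (S₂ i).ncard - (SdA ℋ + SdA ℋ')))
            + ∑ _i : V, (SdA ℋ + SdA ℋ') := Finset.sum_add_distrib
      _ = _ := by rw [Finset.sum_const, Finset.card_univ, smul_eq_mul]
  have hTcard : T.ncard ≤ ∑ i : V, ((S₁ i).ncard + (S₂ i).ncard - (SdA ℋ + SdA ℋ')) := by
    rw [Set.ncard_eq_toFinset_card']
    calc T.toFinset.card = ∑ _i ∈ T.toFinset, 1 := Finset.card_eq_sum_ones _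
      _ ≤ ∑ i ∈ T.toFinset, ((S₁ i).ncard + (S₂ i).ncard - (SdA ℋ + SdA ℋ')) :=
          Finset.sum_le_sum (fun i hi => by
            rw [Set.mem_toFinset] at hi
            have : SdA ℋ + SdA ℋ' < (S₁ i).ncard + (S₂ i).ncard := hi
            omega)
      _ ≤ ∑ i : V, ((S₁ i).ncard + (S₂ i).ncard - (SdA ℋ + SdA ℋ')) :=
          Finset.sum_le_sum_of_subset (Finset.subset_univ _)
  have hDcard : (S₀ ∪ T).ncard ≤ S₀.ncard + T.ncard := Set.ncard_union_le _ _
  have hmul : Fintype.card V * (SdA ℋ + SdA ℋ')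
      = Fintype.card V * SdA ℋ + Fintype.card V * SdA ℋ' := mul_add _ _ _
  omega

end Lower

theorem statement_17 {V V₁ V₂ : Type*} [Fintype V] [Nontrivial V]
    [Fintype V₁] [Nontrivial V₁] [Fintype V₂] [Nontrivial V₂]
    (𝒢 : Set (SimpleGraph V)) (h𝒢ne : 𝒢.Nonempty) (h𝒢 : ∀ G ∈ 𝒢, G.Connected)
    (ℋ : Set (SimpleGraph V₁)) (hℋne : ℋ.Nonempty)
    (ℋ' : Set (SimpleGraph V₂)) (hℋ'ne : ℋ'.Nonempty)
    (hB : ∃ B : Set V₁, IsSimAdjBasis ℋ B ∧ ∀ H ∈ ℋ, ∀ v : V₁, ¬ B ⊆ H.neighborSet v)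
    (hB' : ∀ B' : Set V₂, IsSimAdjBasis ℋ' B' →
      ∃ H' ∈ ℋ', ∃ v' : V₂, B' ⊆ H'.neighborSet v') :
    SdA (coronaFam 𝒢 (joinFam ℋ ℋ')) =
      Fintype.card V * SdA ℋ + Fintype.card V * SdA ℋ' + Sgamma 𝒢 := by
  exact le_antisymm (upper_bound 𝒢 ℋ hℋne ℋ' hℋ'ne hB)
    (lower_bound 𝒢 h𝒢ne ℋ hℋne ℋ' hℋ'ne hB')
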